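/- Fix positive reals μ, r, β_0 < β_n and ω_n ≥ 0, and define G(x) = 1 + r/(β_0 x + μ) − β_n/(β_n x + μ + ω_n) − ω_n β_0/((β_0 x + μ)(β_n x + μ + ω_n)). If (ω_n+μ)(μ+r) < β_0 ω_n + β_n μ, then G(0) < 0 and G(1) > 0, so G has a root in (0,1); moreover this root is unique in [0,1] (the quadratic numerator of G has exactly one root in [0,1], the other root being strictly negative). -/

import Mathlib

theorem stmt_14 (μ r β₀ βn ωn : ℝ)
    (hμ : 0 < μ) (hr : 0 < r) (hβ₀ : 0 < β₀) (hβn : 0 < βn)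
    (hlt : β₀ < βn) (hωn : 0 ≤ ωn)
    (G : ℝ → ℝ)
    (hG : ∀ x, G x = 1 + r / (β₀ * x + μ) - βn / (βn * x + μ + ωn) -
      ωn * β₀ / ((β₀ * x + μ) * (βn * x + μ + ωn)))
    (hyp : (ωn + μ) * (μ + r) < β₀ * ωn + βn * μ) :
    G 0 < 0 ∧ 0 < G 1 ∧ (∃ x ∈ Set.Ioo (0 : ℝ) 1, G x = 0) ∧
      ∃! x, x ∈ Set.Icc (0 : ℝ) 1 ∧ G x = 0 := by
  have hd1 : ∀ x ∈ Set.Icc (0:ℝ) 1, 0 < β₀ * x + μ := by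
    intro x hx; nlinarith [hx.1]
  have hd2 : ∀ x ∈ Set.Icc (0:ℝ) 1, 0 < βn * x + μ + ωn := by
    intro x hx; nlinarith [hx.1]
  set N : ℝ → ℝ := fun x =>
    (β₀ * x + μ) * (βn * x + μ + ωn) + r * (βn * x + μ + ωn)
      - βn * (β₀ * x + μ) - ωn * β₀ with hNdef
  have hGN : ∀ x ∈ Set.Icc (0:ℝ) 1,
      G x = N x / ((β₀ * x + μ) * (βn * x + μ + ωn)) := by
    intro x hx
    have h1 := hd1 x hx
    have h2 := hd2 x hx
    rw [hG, hNdef]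
    have h1' := h1.ne'
    have h2' := h2.ne'
    beta_reduce
    generalize β₀ * x + μ = a at h1' ⊢
    generalize βn * x + μ + ωn = b at h2' ⊢
    field_simp
  have hzero : ∀ x ∈ Set.Icc (0:ℝ) 1, (G x = 0 ↔ N x = 0) := by
    intro x hx
    rw [hGN x hx, div_eq_zero_iff]
    constructor
    · rintro (h | h)
      · exact h
      · exact absurd h (ne_of_gt (mul_pos (hd1 x hx) (hd2 x hx)))
    · exact Or.inl
  have hN0 : N 0 < 0 := by
    simp only [hNdef]; nlinarith
  have hN1 : 0 < N 1 := by
    simp only [hNdef]; nlinarith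
  have huniq : ∀ x ∈ Set.Icc (0:ℝ) 1, ∀ y ∈ Set.Icc (0:ℝ) 1,
      N x = 0 → N y = 0 → x = y := by
    intro x hx y hy hNx hNy
    simp only [hNdef] at hNx hNy
    by_contra hne
    have hNx' : β₀ * βn * x ^ 2 + (β₀ * (μ + ωn) + μ * βn + r * βn - βn * β₀) * x
        + ((μ + r) * (μ + ωn) - βn * μ - ωn * β₀) = 0 := by linear_combination hNx
    have hNy' : β₀ * βn * y ^ 2 + (β₀ * (μ + ωn) + μ * βn + r * βn - βn * β₀) * y
        + ((μ + r) * (μ + ωn) - βn * μ - ωn * β₀) = 0 := by linear_combination hNy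
    have hprod : (x - y) * (β₀ * βn * (x + y)
        + (β₀ * (μ + ωn) + μ * βn + r * βn - βn * β₀)) = 0 := by
      linear_combination hNx' - hNy'
    rcases mul_eq_zero.mp hprod with h | h
    · exact hne (by linarith [sub_eq_zero.mp h])
    · have hc : (μ + r) * (μ + ωn) - βn * μ - ωn * β₀ = β₀ * βn * (x * y) := by
        linear_combination hNx' - x * h
      nlinarith [mul_nonneg hx.1 hy.1, mul_pos hβ₀ hβn]
  have hcont : Continuous N := by
    rw [hNdef]; fun_prop
  have hIVT := intermediate_value_Ioo (by norm_num : (0:ℝ) ≤ 1) hcont.continuousOn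
  have h0mem : (0:ℝ) ∈ Set.Ioo (N 0) (N 1) := ⟨hN0, hN1⟩
  obtain ⟨x₀, hx₀Ioo, hNx₀⟩ := hIVT h0mem
  have hx₀Icc : x₀ ∈ Set.Icc (0:ℝ) 1 := Set.Ioo_subset_Icc_self hx₀Ioo
  have hGx₀ : G x₀ = 0 := (hzero x₀ hx₀Icc).mpr hNx₀
  refine ⟨?_, ?_, ⟨x₀, hx₀Ioo, hGx₀⟩, x₀, ⟨hx₀Icc, hGx₀⟩, ?_⟩
  · rw [hGN 0 (by norm_num)]
    exact div_neg_of_neg_of_pos hN0 (mul_pos (hd1 0 (by norm_num)) (hd2 0 (by norm_num)))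
  · rw [hGN 1 (by norm_num)]
    exact div_pos hN1 (mul_pos (hd1 1 (by norm_num)) (hd2 1 (by norm_num)))
  · rintro y ⟨hyIcc, hGy⟩
    exact huniq y hyIcc x₀ hx₀Icc ((hzero y hyIcc).mp hGy) hNx₀
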